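/- Let p ∈ (0,1), let η ∈ (0,1), and let ε ∈ (0,p). Then there exists N₁ ∈ ℕ such that for every natural number N > N₁ and every natural number n₀ with n₀ ≤ (p − ε)·N, one has Σ_{n = n₀+1}^{N} C(N,n)·p^n·(1 − p)^{N − n}·((n − N·p)/(p·(1 − p)))² > η · Σ_{n = 0}^{N} C(N,n)·p^n·(1 − p)^{N − n}·((n − N·p)/(p·(1 − p)))². -/

import Mathlib

open scoped BigOperators

private lemma choose_mul_descFactorial (N j m : ℕ) (h : j + m ≤ N) :
    N.choose (j + m) * (j + m).descFactorial j = N.descFactorial j * (N - j).choose m := by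
  rw [Nat.descFactorial_eq_factorial_mul_choose, Nat.descFactorial_eq_factorial_mul_choose,
    show N.choose (j + m) * (Nat.factorial j * (j + m).choose j)
        = Nat.factorial j * (N.choose (j + m) * (j + m).choose j) by ring,
    Nat.choose_mul (Nat.le_add_right j m), Nat.add_sub_cancel_left]
  ring

private lemma fmom (p : ℝ) (N j : ℕ) (hj : j ≤ N) :
    ∑ n ∈ Finset.range (N + 1),
        (N.choose n : ℝ) * p ^ n * (1 - p) ^ (N - n) * (n.descFactorial j : ℝ)
      = (N.descFactorial j : ℝ) * p ^ j := by
  have hsub : Finset.Ico j (N + 1) ⊆ Finset.range (N + 1) := by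
    intro x hx
    simp only [Finset.mem_Ico] at hx
    exact Finset.mem_range.2 hx.2
  rw [← Finset.sum_subset hsub (by
    intro x hx hx'
    have hxj : x < j := by
      simp only [Finset.mem_range] at hx
      simp only [Finset.mem_Ico, not_and, not_lt] at hx'
      by_contra hc
      push_neg at hc
      omega
    rw [Nat.descFactorial_eq_zero_iff_lt.2 hxj]
    simp)]
  rw [Finset.sum_Ico_eq_sum_range, show N + 1 - j = N - j + 1 by omega]
  have hterm : ∀ m ∈ Finset.range (N - j + 1),
      (N.choose (j + m) : ℝ) * p ^ (j + m) * (1 - p) ^ (N - (j + m)) *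
          ((j + m).descFactorial j : ℝ)
        = (N.descFactorial j : ℝ) * p ^ j *
            (((N - j).choose m : ℝ) * p ^ m * (1 - p) ^ (N - j - m)) := by
    intro m hm
    have hm' : j + m ≤ N := by
      simp only [Finset.mem_range] at hm
      omega
    have hkeyR : (N.choose (j + m) : ℝ) * ((j + m).descFactorial j : ℝ)
        = (N.descFactorial j : ℝ) * ((N - j).choose m : ℝ) := by
      exact_mod_cast congrArg (fun t : ℕ => (t : ℝ)) (choose_mul_descFactorial N j m hm')
    rw [show N - (j + m) = N - j - m by omega, pow_add]
    calc (N.choose (j + m) : ℝ) * (p ^ j * p ^ m) * (1 - p) ^ (N - j - m) *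
          ((j + m).descFactorial j : ℝ)
        = ((N.choose (j + m) : ℝ) * ((j + m).descFactorial j : ℝ)) *
            (p ^ j * p ^ m * (1 - p) ^ (N - j - m)) := by ring
      _ = ((N.descFactorial j : ℝ) * ((N - j).choose m : ℝ)) *
            (p ^ j * p ^ m * (1 - p) ^ (N - j - m)) := by rw [hkeyR]
      _ = _ := by ring
  rw [Finset.sum_congr rfl hterm, ← Finset.mul_sum]
  have hbin : ∑ m ∈ Finset.range (N - j + 1),
      ((N - j).choose m : ℝ) * p ^ m * (1 - p) ^ (N - j - m) = 1 := by
    have h := add_pow p (1 - p) (N - j)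
    rw [show p + (1 - p) = (1 : ℝ) by ring, one_pow] at h
    rw [show (∑ m ∈ Finset.range (N - j + 1),
          ((N - j).choose m : ℝ) * p ^ m * (1 - p) ^ (N - j - m))
        = ∑ m ∈ Finset.range (N - j + 1),
          p ^ m * (1 - p) ^ (N - j - m) * ((N - j).choose m : ℝ) from
      Finset.sum_congr rfl fun m _ => by ring]
    exact h.symm
  rw [hbin, mul_one]

private lemma df1 (n : ℕ) : (n.descFactorial 1 : ℝ) = n := by
  simp [Nat.descFactorial]

private lemma df2 (n : ℕ) : (n.descFactorial 2 : ℝ) = n * ((n : ℝ) - 1) := by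
  rcases n with _ | n <;>
    · simp [Nat.descFactorial]
      try push_cast
      try ring

private lemma df3 (n : ℕ) : (n.descFactorial 3 : ℝ) = n * ((n : ℝ) - 1) * ((n : ℝ) - 2) := by
  rcases n with _ | _ | n <;>
    · simp [Nat.descFactorial]
      try push_cast
      try ring

private lemma df4 (n : ℕ) :
    (n.descFactorial 4 : ℝ) = n * ((n : ℝ) - 1) * ((n : ℝ) - 2) * ((n : ℝ) - 3) := by
  rcases n with _ | _ | _ | n <;>
    · simp [Nat.descFactorial]
      try push_cast
      try ring

private lemma var_sum (p : ℝ) (N : ℕ) (hN : 4 ≤ N) :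
    ∑ n ∈ Finset.range (N + 1),
        (N.choose n : ℝ) * p ^ n * (1 - p) ^ (N - n) * ((n : ℝ) - N * p) ^ 2
      = N * p * (1 - p) := by
  have e2 : ∀ n ∈ Finset.range (N + 1),
      (N.choose n : ℝ) * p ^ n * (1 - p) ^ (N - n) * ((n : ℝ) - N * p) ^ 2
        = (N.choose n : ℝ) * p ^ n * (1 - p) ^ (N - n) * (n.descFactorial 2 : ℝ)
          + (1 - 2 * ((N : ℝ) * p)) *
            ((N.choose n : ℝ) * p ^ n * (1 - p) ^ (N - n) * (n.descFactorial 1 : ℝ))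
          + ((N : ℝ) * p) ^ 2 *
            ((N.choose n : ℝ) * p ^ n * (1 - p) ^ (N - n) * (n.descFactorial 0 : ℝ)) := by
    intro n _
    rw [df2, df1, Nat.descFactorial_zero]
    push_cast
    ring
  rw [Finset.sum_congr rfl e2]
  simp only [Finset.sum_add_distrib, ← Finset.mul_sum]
  rw [fmom p N 2 (by omega), fmom p N 1 (by omega), fmom p N 0 (by omega), df2, df1,
    Nat.descFactorial_zero]
  push_cast
  ring

private lemma m4_sum (p : ℝ) (N : ℕ) (hN : 4 ≤ N) :
    ∑ n ∈ Finset.range (N + 1),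
        (N.choose n : ℝ) * p ^ n * (1 - p) ^ (N - n) * ((n : ℝ) - N * p) ^ 4
      = N * p * (1 - p) * (1 - 6 * (p * (1 - p))) + 3 * (N : ℝ) ^ 2 * (p * (1 - p)) ^ 2 := by
  have e4 : ∀ n ∈ Finset.range (N + 1),
      (N.choose n : ℝ) * p ^ n * (1 - p) ^ (N - n) * ((n : ℝ) - N * p) ^ 4
        = (N.choose n : ℝ) * p ^ n * (1 - p) ^ (N - n) * (n.descFactorial 4 : ℝ)
          + (6 - 4 * ((N : ℝ) * p)) *
            ((N.choose n : ℝ) * p ^ n * (1 - p) ^ (N - n) * (n.descFactorial 3 : ℝ))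
          + (7 - 12 * ((N : ℝ) * p) + 6 * ((N : ℝ) * p) ^ 2) *
            ((N.choose n : ℝ) * p ^ n * (1 - p) ^ (N - n) * (n.descFactorial 2 : ℝ))
          + (1 - 4 * ((N : ℝ) * p) + 6 * ((N : ℝ) * p) ^ 2 - 4 * ((N : ℝ) * p) ^ 3) *
            ((N.choose n : ℝ) * p ^ n * (1 - p) ^ (N - n) * (n.descFactorial 1 : ℝ))
          + ((N : ℝ) * p) ^ 4 *
            ((N.choose n : ℝ) * p ^ n * (1 - p) ^ (N - n) * (n.descFactorial 0 : ℝ)) := by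
    intro n _
    rw [df4, df3, df2, df1, Nat.descFactorial_zero]
    push_cast
    ring
  rw [Finset.sum_congr rfl e4]
  simp only [Finset.sum_add_distrib, ← Finset.mul_sum]
  rw [fmom p N 4 (by omega), fmom p N 3 (by omega), fmom p N 2 (by omega),
    fmom p N 1 (by omega), fmom p N 0 (by omega), df4, df3, df2, df1, Nat.descFactorial_zero]
  push_cast
  ring

set_option maxHeartbeats 1000000 in
/-- Lemma: the tail of the binomial Fisher-information sum dominates.
For `p ∈ (0,1)`, `η ∈ (0,1)` and `ε ∈ (0,p)`, there is `N₁` such that for every `N > N₁`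
and every `n₀ ≤ (p−ε)N`, the partial sum over `n = n₀+1,…,N` of
`C(N,n)p^n(1−p)^{N−n}((n−Np)/(p(1−p)))²` exceeds `η` times the full sum. -/
theorem stmt17 (p η ε : ℝ) (hp0 : 0 < p) (hp1 : p < 1)
    (hη0 : 0 < η) (hη1 : η < 1) (hε0 : 0 < ε) (hεp : ε < p) :
    ∃ N₁ : ℕ, ∀ N : ℕ, N₁ < N → ∀ n₀ : ℕ, (n₀ : ℝ) ≤ (p - ε) * N →
      ∑ n ∈ Finset.Ioc n₀ N,
          (N.choose n : ℝ) * p ^ n * (1 - p) ^ (N - n)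
            * (((n : ℝ) - N * p) / (p * (1 - p))) ^ 2
        > η * ∑ n ∈ Finset.range (N + 1),
          (N.choose n : ℝ) * p ^ n * (1 - p) ^ (N - n)
            * (((n : ℝ) - N * p) / (p * (1 - p))) ^ 2 := by
  have hq0 : 0 < 1 - p := by linarith
  have hpq : 0 < p * (1 - p) := mul_pos hp0 hq0
  have hη1' : 0 < 1 - η := by linarith
  have hwn : ∀ (N n : ℕ), 0 ≤ (N.choose n : ℝ) * p ^ n * (1 - p) ^ (N - n) := fun N n =>
    mul_nonneg (mul_nonneg (Nat.cast_nonneg _) (pow_nonneg hp0.le n)) (pow_nonneg hq0.le _)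
  refine ⟨max 4 ⌈4 / (p * (1 - p) * ε ^ 2 * (1 - η))⌉₊, ?_⟩
  intro N hN n₀ hn₀
  have hN4 : 4 ≤ N := le_of_lt (lt_of_le_of_lt (le_max_left _ _) hN)
  have hNpos : (0 : ℝ) < N := by
    have : (4 : ℝ) ≤ N := by exact_mod_cast hN4
    linarith
  have hNR : 4 / (p * (1 - p) * ε ^ 2 * (1 - η)) < (N : ℝ) := by
    calc 4 / (p * (1 - p) * ε ^ 2 * (1 - η)) ≤ (⌈4 / (p * (1 - p) * ε ^ 2 * (1 - η))⌉₊ : ℝ) :=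
          Nat.le_ceil _
      _ < N := by exact_mod_cast lt_of_le_of_lt (le_max_right _ _) hN
  have hn₀N : n₀ ≤ N := by
    have h1 : (n₀ : ℝ) ≤ N := le_trans hn₀ (by nlinarith)
    exact_mod_cast h1
  -- split the full sum
  have hsplit : Finset.range (N + 1) = Finset.range (n₀ + 1) ∪ Finset.Ioc n₀ N := by
    ext x
    simp only [Finset.mem_range, Finset.mem_union, Finset.mem_Ioc]
    omega
  have hdisj : Disjoint (Finset.range (n₀ + 1)) (Finset.Ioc n₀ N) := by
    rw [Finset.disjoint_left]
    intro a ha hb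
    simp only [Finset.mem_range] at ha
    simp only [Finset.mem_Ioc] at hb
    omega
  have hsum : ∑ n ∈ Finset.range (N + 1),
        (N.choose n : ℝ) * p ^ n * (1 - p) ^ (N - n)
          * (((n : ℝ) - N * p) / (p * (1 - p))) ^ 2
      = (∑ n ∈ Finset.range (n₀ + 1),
          (N.choose n : ℝ) * p ^ n * (1 - p) ^ (N - n)
            * (((n : ℝ) - N * p) / (p * (1 - p))) ^ 2)
        + ∑ n ∈ Finset.Ioc n₀ N,
          (N.choose n : ℝ) * p ^ n * (1 - p) ^ (N - n)
            * (((n : ℝ) - N * p) / (p * (1 - p))) ^ 2 := by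
    rw [hsplit, Finset.sum_union hdisj]
  -- full sum value
  have hfull : ∑ n ∈ Finset.range (N + 1),
        (N.choose n : ℝ) * p ^ n * (1 - p) ^ (N - n)
          * (((n : ℝ) - N * p) / (p * (1 - p))) ^ 2
      = (N : ℝ) / (p * (1 - p)) := by
    have e : ∀ n ∈ Finset.range (N + 1),
        (N.choose n : ℝ) * p ^ n * (1 - p) ^ (N - n)
            * (((n : ℝ) - N * p) / (p * (1 - p))) ^ 2
          = ((N.choose n : ℝ) * p ^ n * (1 - p) ^ (N - n) * ((n : ℝ) - N * p) ^ 2)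
              * (1 / (p * (1 - p)) ^ 2) := by
      intro n _
      rw [div_pow]
      ring
    rw [Finset.sum_congr rfl e, ← Finset.sum_mul, var_sum p N hN4]
    field_simp
  -- head bound
  have hN4R : (4 : ℝ) ≤ N := by exact_mod_cast hN4
  have hM4le : (N : ℝ) * p * (1 - p) * (1 - 6 * (p * (1 - p)))
      + 3 * (N : ℝ) ^ 2 * (p * (1 - p)) ^ 2 ≤ 4 * (N : ℝ) ^ 2 := by
    have h1 : p * (1 - p) ≤ 1 := by nlinarith
    have h2 : (p * (1 - p)) ^ 2 ≤ 1 := by nlinarith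
    have hA : 3 * (N : ℝ) ^ 2 * (p * (1 - p)) ^ 2 ≤ 3 * (N : ℝ) ^ 2 := by
      nlinarith [sq_nonneg (N : ℝ)]
    have hB : (N : ℝ) * (p * (1 - p)) ≤ (N : ℝ) ^ 2 := by nlinarith
    have hC : 0 ≤ 6 * (N : ℝ) * (p * (1 - p)) ^ 2 := by positivity
    nlinarith [hA, hB, hC]
  have hC2 : 0 < (p * (1 - p)) ^ 2 * (ε * (N : ℝ)) ^ 2 := by positivity
  have hHead : ∑ n ∈ Finset.range (n₀ + 1),
        (N.choose n : ℝ) * p ^ n * (1 - p) ^ (N - n)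
          * (((n : ℝ) - N * p) / (p * (1 - p))) ^ 2
      ≤ 4 / ((p * (1 - p)) ^ 2 * ε ^ 2) := by
    have step1 : ∀ n ∈ Finset.range (n₀ + 1),
        (N.choose n : ℝ) * p ^ n * (1 - p) ^ (N - n)
            * (((n : ℝ) - N * p) / (p * (1 - p))) ^ 2
          ≤ ((N.choose n : ℝ) * p ^ n * (1 - p) ^ (N - n) * ((n : ℝ) - N * p) ^ 4)
              / ((p * (1 - p)) ^ 2 * (ε * (N : ℝ)) ^ 2) := by
      intro n hn
      have hnn : (n : ℝ) ≤ (p - ε) * N := by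
        have h1 : n ≤ n₀ := by
          simp only [Finset.mem_range] at hn; omega
        calc (n : ℝ) ≤ (n₀ : ℝ) := by exact_mod_cast h1
          _ ≤ (p - ε) * N := hn₀
      have hd : ε * (N : ℝ) ≤ (N : ℝ) * p - n := by nlinarith [hnn]
      have hεN : 0 < ε * (N : ℝ) := by positivity
      have hd2 : (ε * (N : ℝ)) ^ 2 ≤ ((n : ℝ) - N * p) ^ 2 := by nlinarith
      have hw : 0 ≤ (N.choose n : ℝ) * p ^ n * (1 - p) ^ (N - n) := hwn N n
      have key : ((n : ℝ) - N * p) ^ 2 / (p * (1 - p)) ^ 2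
          ≤ ((n : ℝ) - N * p) ^ 4 / ((p * (1 - p)) ^ 2 * (ε * (N : ℝ)) ^ 2) := by
        rw [div_le_div_iff₀ (by positivity) hC2]
        have h5 : (ε * (N : ℝ)) ^ 2 * ((n : ℝ) - N * p) ^ 2
            ≤ ((n : ℝ) - N * p) ^ 2 * ((n : ℝ) - N * p) ^ 2 :=
          mul_le_mul_of_nonneg_right hd2 (sq_nonneg _)
        nlinarith [mul_le_mul_of_nonneg_left h5 (sq_nonneg (p * (1 - p)))]
      rw [div_pow, mul_div_assoc]
      exact mul_le_mul_of_nonneg_left key hw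
    calc ∑ n ∈ Finset.range (n₀ + 1),
          (N.choose n : ℝ) * p ^ n * (1 - p) ^ (N - n)
            * (((n : ℝ) - N * p) / (p * (1 - p))) ^ 2
        ≤ ∑ n ∈ Finset.range (n₀ + 1),
          ((N.choose n : ℝ) * p ^ n * (1 - p) ^ (N - n) * ((n : ℝ) - N * p) ^ 4)
            / ((p * (1 - p)) ^ 2 * (ε * (N : ℝ)) ^ 2) := Finset.sum_le_sum step1
      _ = (∑ n ∈ Finset.range (n₀ + 1),
          (N.choose n : ℝ) * p ^ n * (1 - p) ^ (N - n) * ((n : ℝ) - N * p) ^ 4)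
            / ((p * (1 - p)) ^ 2 * (ε * (N : ℝ)) ^ 2) := by rw [Finset.sum_div]
      _ ≤ (∑ n ∈ Finset.range (N + 1),
          (N.choose n : ℝ) * p ^ n * (1 - p) ^ (N - n) * ((n : ℝ) - N * p) ^ 4)
            / ((p * (1 - p)) ^ 2 * (ε * (N : ℝ)) ^ 2) := by
          gcongr
      _ ≤ 4 / ((p * (1 - p)) ^ 2 * ε ^ 2) := by
          rw [m4_sum p N hN4, div_le_div_iff₀ hC2 (by positivity)]
          calc ((N : ℝ) * p * (1 - p) * (1 - 6 * (p * (1 - p)))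
                + 3 * (N : ℝ) ^ 2 * (p * (1 - p)) ^ 2) * ((p * (1 - p)) ^ 2 * ε ^ 2)
              ≤ 4 * (N : ℝ) ^ 2 * ((p * (1 - p)) ^ 2 * ε ^ 2) :=
                mul_le_mul_of_nonneg_right hM4le (by positivity)
            _ = 4 * ((p * (1 - p)) ^ 2 * (ε * (N : ℝ)) ^ 2) := by ring
  have h4 : (4 : ℝ) < (N : ℝ) * (p * (1 - p) * ε ^ 2 * (1 - η)) :=
    (div_lt_iff₀ (by positivity)).mp hNR
  have hfin : 4 / ((p * (1 - p)) ^ 2 * ε ^ 2) < (1 - η) * ((N : ℝ) / (p * (1 - p))) := by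
    rw [div_lt_iff₀ (by positivity)]
    calc (4 : ℝ) < (N : ℝ) * (p * (1 - p) * ε ^ 2 * (1 - η)) := h4
      _ = (1 - η) * ((N : ℝ) / (p * (1 - p))) * ((p * (1 - p)) ^ 2 * ε ^ 2) := by
          field_simp
  rw [hfull] at hsum
  rw [hfull]
  have hid : η * ((N : ℝ) / (p * (1 - p)))
      = (N : ℝ) / (p * (1 - p)) - (1 - η) * ((N : ℝ) / (p * (1 - p))) := by ring
  linarith
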